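/- Let v, ω₁, ω₂ be weights with σ_i = ω_i^{-1/(p_i-1)} ∈ L¹, 1 < p₁, p₂ < ∞, 1/p = 1/p₁ + 1/p₂, and suppose (ω₁, ω₂) satisfies the reverse Hölder condition RH(p₁,p₂): for every stopping time τ, (∫_{{τ<∞}} σ₁ dμ)^{p/p₁} (∫_{{τ<∞}} σ₂ dμ)^{p/p₂} ≤ C ∫_{{τ<∞}} σ₁^{p/p₁} σ₂^{p/p₂} dμ. If the stopped-martingale inequality (∫_{{τ<∞}} |f_τ g_τ|^p v dμ)^{1/p} ≤ C ‖f‖_{L^{p₁}(ω₁)} ‖g‖_{L^{p₂}(ω₂)} holds for all stopping times τ and all f, g, then (v, ω₁, ω₂) ∈ A_{p⃗}, i.e. sup_n E_n(v)^{1/p} E_n(σ₁)^{1/p₁'} E_n(σ₂)^{1/p₂'} ≤ C'. -/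

import Mathlib

open MeasureTheory Filter ENNReal Set

noncomputable section

lemma aux_condexp_pos {Ω : Type*} {m : MeasurableSpace Ω} {m0 : MeasurableSpace Ω}
    {μ : Measure Ω} [IsProbabilityMeasure μ] (hm : m ≤ m0) {f : Ω → ℝ}
    (hf : ∀ x, 0 < f x) (hfI : Integrable f μ) : ∀ᵐ x ∂μ, 0 < (μ[f|m]) x := by
  haveI : SigmaFinite (μ.trim hm) := by infer_instance
  set g := μ[f|m] with hg
  have hgm : StronglyMeasurable[m] g := stronglyMeasurable_condExp
  set D : Set Ω := {x | g x ≤ 0} with hD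
  have hDm : MeasurableSet[m] D := hgm.measurable measurableSet_Iic
  have hDm0 : MeasurableSet[m0] D := hm _ hDm
  have h1 : ∫ x in D, g x ∂μ = ∫ x in D, f x ∂μ := setIntegral_condExp hm hfI hDm
  have h2 : ∫ x in D, g x ∂μ ≤ 0 := by
    apply integral_nonpos_of_ae
    filter_upwards [ae_restrict_mem hDm0] with x hx using hx
  have h3 : μ D = 0 := by
    by_contra h
    have hpos : 0 < ∫ x in D, f x ∂μ := by
      rw [setIntegral_pos_iff_support_of_nonneg_ae]
      · have hsupp : Function.support f ∩ D = D := by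
          ext x; simp [Function.mem_support, (hf x).ne']
        rw [hsupp]
        exact lt_of_le_of_ne zero_le (Ne.symm h)
      · filter_upwards with x using (hf x).le
      · exact hfI.integrableOn
    linarith [h1 ▸ h2]
  have h4 : μ {x | ¬ 0 < g x} = 0 := by
    convert h3 using 2; ext x; simp [D, not_lt]
  filter_upwards [ae_iff.2 h4] with x hx
  simpa using hx

lemma aux_pullout {Ω : Type*} {m : MeasurableSpace Ω} {m0 : MeasurableSpace Ω}
    {μ : Measure Ω} [IsProbabilityMeasure μ] (hm : m ≤ m0) {φ g : Ω → ℝ}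
    (hφ : StronglyMeasurable[m] φ) (B : ℝ) (hφB : ∀ x, |φ x| ≤ B)
    (hg : Integrable g μ) :
    ∫ x, φ x * g x ∂μ = ∫ x, φ x * (μ[g|m]) x ∂μ := by
  haveI : SigmaFinite (μ.trim hm) := by infer_instance
  have hφm0 : AEStronglyMeasurable φ μ := (hφ.mono hm).aestronglyMeasurable
  have h1 : Integrable (φ * g) μ := by
    simpa [Pi.mul_def] using hg.bdd_mul hφm0 (ae_of_all _ fun x => by simpa using hφB x)
  have h2 := condExp_mul_of_stronglyMeasurable_left hφ h1 hg
  calc ∫ x, φ x * g x ∂μ = ∫ x, (φ * g) x ∂μ := rfl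
    _ = ∫ x, (μ[φ * g|m]) x ∂μ := (integral_condExp hm).symm
    _ = ∫ x, (φ * μ[g|m]) x ∂μ := integral_congr_ae h2
    _ = ∫ x, φ x * (μ[g|m]) x ∂μ := rfl

lemma aux_young {a b s t θ : ℝ} (ha : 0 ≤ a) (hb : 0 ≤ b) (hs : 0 < s) (ht : 0 < t)
    (hθ : 0 < θ) (hθ1 : θ < 1) :
    a ^ θ * b ^ (1 - θ) ≤ θ * (s ^ (θ - 1) * t ^ (1 - θ) * a)
      + (1 - θ) * (s ^ θ * t ^ (-θ) * b) := by
  have key := Real.geom_mean_le_arith_mean2_weighted (w₁ := θ) (w₂ := 1 - θ)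
    (p₁ := s ^ (θ - 1) * t ^ (1 - θ) * a) (p₂ := s ^ θ * t ^ (-θ) * b)
    hθ.le (by linarith) (by positivity) (by positivity) (by ring)
  refine le_trans (le_of_eq ?_) key
  rw [Real.mul_rpow (by positivity) ha, Real.mul_rpow (by positivity) hb,
    Real.mul_rpow (by positivity) (by positivity),
    Real.mul_rpow (by positivity) (by positivity),
    ← Real.rpow_mul hs.le, ← Real.rpow_mul ht.le,
    ← Real.rpow_mul hs.le, ← Real.rpow_mul ht.le]
  have e1 : s ^ ((θ - 1) * θ) * s ^ (θ * (1 - θ)) = 1 := by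
    rw [← Real.rpow_add hs, show (θ - 1) * θ + θ * (1 - θ) = 0 by ring, Real.rpow_zero]
  have e2 : t ^ ((1 - θ) * θ) * t ^ (-θ * (1 - θ)) = 1 := by
    rw [← Real.rpow_add ht, show (1 - θ) * θ + -θ * (1 - θ) = 0 by ring, Real.rpow_zero]
  calc a ^ θ * b ^ (1 - θ)
      = (s ^ ((θ - 1) * θ) * s ^ (θ * (1 - θ))) * ((t ^ ((1 - θ) * θ) * t ^ (-θ * (1 - θ))))
        * (a ^ θ * b ^ (1 - θ)) := by rw [e1, e2]; ring
    _ = s ^ ((θ - 1) * θ) * t ^ ((1 - θ) * θ) * a ^ θ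
        * (s ^ (θ * (1 - θ)) * t ^ (-θ * (1 - θ)) * b ^ (1 - θ)) := by ring

set_option maxHeartbeats 2000000 in
theorem stmt_4
    {Ω : Type*} {m0 : MeasurableSpace Ω} {μ : Measure Ω} [IsProbabilityMeasure μ]
    (ℱ : Filtration ℕ m0)
    (v ω₁ ω₂ : Ω → ℝ)
    (hv : ∀ x, 0 < v x) (hω₁ : ∀ x, 0 < ω₁ x) (hω₂ : ∀ x, 0 < ω₂ x)
    (hvI : Integrable v μ) (hω₁I : Integrable ω₁ μ) (hω₂I : Integrable ω₂ μ)
    (p p₁ p₂ C : ℝ) (hp₁ : 1 < p₁) (hp₂ : 1 < p₂)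
    (hp : 1 / p = 1 / p₁ + 1 / p₂) (hC : 0 < C)
    (hσ₁I : Integrable (fun x => ω₁ x ^ (-(1 / (p₁ - 1)))) μ)
    (hσ₂I : Integrable (fun x => ω₂ x ^ (-(1 / (p₂ - 1)))) μ)
    (hRH : ∀ τ : Ω → ℕ∞, (∀ n : ℕ, MeasurableSet[ℱ n] {x | τ x ≤ (n : ℕ∞)}) →
      (∫ x in {x | τ x ≠ ⊤}, ω₁ x ^ (-(1 / (p₁ - 1))) ∂μ) ^ (p / p₁)
          * (∫ x in {x | τ x ≠ ⊤}, ω₂ x ^ (-(1 / (p₂ - 1))) ∂μ) ^ (p / p₂)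
        ≤ C * ∫ x in {x | τ x ≠ ⊤},
            (ω₁ x ^ (-(1 / (p₁ - 1)))) ^ (p / p₁) * (ω₂ x ^ (-(1 / (p₂ - 1)))) ^ (p / p₂) ∂μ)
    (H : ∀ τ : Ω → ℕ∞, (∀ n : ℕ, MeasurableSet[ℱ n] {x | τ x ≤ (n : ℕ∞)}) →
      ∀ f g : Ω → ℝ, Integrable f μ →
        Integrable (fun x => |f x| ^ p₁ * ω₁ x) μ →
        Integrable g μ →
        Integrable (fun x => |g x| ^ p₂ * ω₂ x) μ →
        (∫ x in {x | τ x ≠ ⊤},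
            |(μ[f|ℱ (τ x).toNat]) x * (μ[g|ℱ (τ x).toNat]) x| ^ p * v x ∂μ) ^ (1 / p)
          ≤ C * (∫ x, |f x| ^ p₁ * ω₁ x ∂μ) ^ (1 / p₁)
              * (∫ x, |g x| ^ p₂ * ω₂ x ∂μ) ^ (1 / p₂)) :
    ∃ C' : ℝ, 0 < C' ∧ ∀ n : ℕ, ∀ᵐ x ∂μ,
      (μ[v|ℱ n]) x ^ (1 / p)
        * (μ[fun y => ω₁ y ^ (-(1 / (p₁ - 1)))|ℱ n]) x ^ ((p₁ - 1) / p₁)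
        * (μ[fun y => ω₂ y ^ (-(1 / (p₂ - 1)))|ℱ n]) x ^ ((p₂ - 1) / p₂) ≤ C' := by
  classical
  have hp₁0 : (0:ℝ) < p₁ := by linarith
  have hp₂0 : (0:ℝ) < p₂ := by linarith
  have hp₁1 : p₁ - 1 ≠ 0 := by intro h; linarith [sub_eq_zero.mp h]
  have hp₂1 : p₂ - 1 ≠ 0 := by intro h; linarith [sub_eq_zero.mp h]
  have hpinv : 0 < 1 / p := by rw [hp]; positivity
  have hp0 : 0 < p := one_div_pos.mp hpinv
  have hθ₁ : 0 < p / p₁ := by positivity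
  have hθ₂ : 0 < p / p₂ := by positivity
  have hsum : p / p₁ + p / p₂ = 1 := by
    have h' : p / p₁ + p / p₂ = p * (1 / p₁ + 1 / p₂) := by ring
    rw [h', ← hp, mul_one_div, div_self hp0.ne']
  have hθlt : p / p₁ < 1 := by linarith
  set σ₁ : Ω → ℝ := fun x => ω₁ x ^ (-(1 / (p₁ - 1))) with hσ₁def
  set σ₂ : Ω → ℝ := fun x => ω₂ x ^ (-(1 / (p₂ - 1))) with hσ₂def
  have hσ₁pos : ∀ x, 0 < σ₁ x := fun x => Real.rpow_pos_of_pos (hω₁ x) _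
  have hσ₂pos : ∀ x, 0 < σ₂ x := fun x => Real.rpow_pos_of_pos (hω₂ x) _
  have key1 : ∀ x, |σ₁ x| ^ p₁ * ω₁ x = σ₁ x := by
    intro x
    rw [abs_of_pos (hσ₁pos x)]
    show (ω₁ x ^ (-(1 / (p₁ - 1)))) ^ p₁ * ω₁ x = ω₁ x ^ (-(1 / (p₁ - 1)))
    rw [← Real.rpow_mul (hω₁ x).le]
    nth_rewrite 2 [← Real.rpow_one (ω₁ x)]
    rw [← Real.rpow_add (hω₁ x)]
    congr 1
    field_simp
    ring
  have key2 : ∀ x, |σ₂ x| ^ p₂ * ω₂ x = σ₂ x := by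
    intro x
    rw [abs_of_pos (hσ₂pos x)]
    show (ω₂ x ^ (-(1 / (p₂ - 1)))) ^ p₂ * ω₂ x = ω₂ x ^ (-(1 / (p₂ - 1)))
    rw [← Real.rpow_mul (hω₂ x).le]
    nth_rewrite 2 [← Real.rpow_one (ω₂ x)]
    rw [← Real.rpow_add (hω₂ x)]
    congr 1
    field_simp
    ring
  refine ⟨(C ^ p * C + 1) ^ (1 / p), Real.rpow_pos_of_pos (by positivity) _, fun n => ?_⟩
  have hle := ℱ.le n
  set s₁ : Ω → ℝ := μ[σ₁|ℱ n] with hs₁def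
  set s₂ : Ω → ℝ := μ[σ₂|ℱ n] with hs₂def
  set w : Ω → ℝ := μ[v|ℱ n] with hwdef
  have hs₁pos : ∀ᵐ x ∂μ, 0 < s₁ x := aux_condexp_pos hle hσ₁pos hσ₁I
  have hs₂pos : ∀ᵐ x ∂μ, 0 < s₂ x := aux_condexp_pos hle hσ₂pos hσ₂I
  have hwpos : ∀ᵐ x ∂μ, 0 < w x := aux_condexp_pos hle hv hvI
  have hs₁m : Measurable[ℱ n] s₁ := stronglyMeasurable_condExp.measurable
  have hs₂m : Measurable[ℱ n] s₂ := stronglyMeasurable_condExp.measurable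
  have hwm : Measurable[ℱ n] w := stronglyMeasurable_condExp.measurable
  set G : Ω → ℝ := fun x =>
    w x * s₁ x ^ (p * ((p₁ - 1) / p₁)) * s₂ x ^ (p * ((p₂ - 1) / p₂)) with hGdef
  have hGm : Measurable[ℱ n] G :=
    (hwm.mul (hs₁m.pow measurable_const)).mul (hs₂m.pow measurable_const)
  set Aset : ℕ → Set Ω := fun m =>
    {x | C ^ p * C + 1 < G x} ∩ {x | 1 / ((m:ℝ)+1) ≤ s₁ x} ∩ {x | s₁ x ≤ (m:ℝ)+1}
      ∩ {x | 1 / ((m:ℝ)+1) ≤ s₂ x} ∩ {x | s₂ x ≤ (m:ℝ)+1}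
      ∩ {x | 0 ≤ w x} ∩ {x | w x ≤ (m:ℝ)+1} with hAsetdef
  have key0 : ∀ m : ℕ, μ (Aset m) = 0 := by
    intro m
    set A : Set Ω := Aset m with hAdef
    have hmem : ∀ x ∈ A, C ^ p * C + 1 < G x ∧ 1 / ((m:ℝ)+1) ≤ s₁ x ∧ s₁ x ≤ (m:ℝ)+1
        ∧ 1 / ((m:ℝ)+1) ≤ s₂ x ∧ s₂ x ≤ (m:ℝ)+1 ∧ 0 ≤ w x ∧ w x ≤ (m:ℝ)+1 := by
      intro x hx
      obtain ⟨⟨⟨⟨⟨⟨h1, h2⟩, h3⟩, h4⟩, h5⟩, h6⟩, h7⟩ := hx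
      exact ⟨h1, h2, h3, h4, h5, h6, h7⟩
    have hAm : MeasurableSet[ℱ n] A := by
      refine (((((((measurableSet_lt measurable_const hGm).inter
        (measurableSet_le measurable_const hs₁m)).inter
        (measurableSet_le hs₁m measurable_const)).inter
        (measurableSet_le measurable_const hs₂m)).inter
        (measurableSet_le hs₂m measurable_const)).inter
        (measurableSet_le measurable_const hwm)).inter
        (measurableSet_le hwm measurable_const))
    have hAm0 : MeasurableSet A := hle _ hAm
    -- bounded integrable helper
    have bnd : ∀ (F : Ω → ℝ), Measurable[ℱ n] F → ∀ B : ℝ, (∀ x ∈ A, |F x| ≤ B) →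
        IntegrableOn F A μ := by
      intro F hF B hB
      apply Measure.integrableOn_of_bounded (measure_ne_top μ A)
        ((hF.mono hle le_rfl).aestronglyMeasurable)
      filter_upwards [ae_restrict_mem hAm0] with x hx
      rw [Real.norm_eq_abs]; exact hB x hx
    -- the stopping time
    set τ : Ω → ℕ∞ := fun x => if x ∈ A then (n : ℕ∞) else ⊤ with hτdef
    have hτ : ∀ k : ℕ, MeasurableSet[ℱ k] {x | τ x ≤ (k : ℕ∞)} := by
      intro k
      by_cases hnk : n ≤ k
      · have hset : {x | τ x ≤ (k : ℕ∞)} = A := by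
          ext x
          by_cases hx : x ∈ A <;> simp [hτdef, hx, Nat.cast_le, hnk, top_le_iff]
        rw [hset]; exact ℱ.mono hnk _ hAm
      · have hset : {x | τ x ≤ (k : ℕ∞)} = ∅ := by
          ext x
          by_cases hx : x ∈ A <;> simp [hτdef, hx, Nat.cast_le, hnk, top_le_iff]
        rw [hset]; exact @MeasurableSet.empty _ (ℱ k)
    have hτset : {x | τ x ≠ ⊤} = A := by
      ext x; by_cases hx : x ∈ A <;> simp [hτdef, hx]
    have hτn : ∀ x ∈ A, (τ x).toNat = n := by
      intro x hx; simp [hτdef, hx]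
    -- f and g
    have hfI : Integrable (A.indicator σ₁) μ := hσ₁I.indicator hAm0
    have hgI : Integrable (A.indicator σ₂) μ := hσ₂I.indicator hAm0
    have hfp : (fun x => |A.indicator σ₁ x| ^ p₁ * ω₁ x) = A.indicator σ₁ := by
      funext x
      by_cases hx : x ∈ A
      · rw [indicator_of_mem hx]; exact key1 x
      · rw [indicator_of_notMem hx, abs_zero, Real.zero_rpow hp₁0.ne', zero_mul]
    have hgp : (fun x => |A.indicator σ₂ x| ^ p₂ * ω₂ x) = A.indicator σ₂ := by
      funext x
      by_cases hx : x ∈ A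
      · rw [indicator_of_mem hx]; exact key2 x
      · rw [indicator_of_notMem hx, abs_zero, Real.zero_rpow hp₂0.ne', zero_mul]
    have hH := H τ hτ (A.indicator σ₁) (A.indicator σ₂) hfI (by rw [hfp]; exact hfI)
      hgI (by rw [hgp]; exact hgI)
    rw [hτset, hfp, hgp, integral_indicator hAm0, integral_indicator hAm0] at hH
    have hlhs1 : ∫ x in A, |(μ[A.indicator σ₁|ℱ (τ x).toNat]) x
          * (μ[A.indicator σ₂|ℱ (τ x).toNat]) x| ^ p * v x ∂μ
        = ∫ x in A, |(μ[A.indicator σ₁|ℱ n]) x * (μ[A.indicator σ₂|ℱ n]) x| ^ p * v x ∂μ :=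
      setIntegral_congr_fun hAm0 (fun x hx => by simp only [hτn x hx])
    rw [hlhs1] at hH
    have hX0 : 0 ≤ ∫ x in A, |(μ[A.indicator σ₁|ℱ n]) x * (μ[A.indicator σ₂|ℱ n]) x| ^ p
        * v x ∂μ :=
      setIntegral_nonneg hAm0 fun x _ =>
        mul_nonneg (Real.rpow_nonneg (abs_nonneg _) _) (hv x).le
    have hEf : μ[A.indicator σ₁|ℱ n] =ᵐ[μ] A.indicator s₁ := condExp_indicator hσ₁I hAm
    have hEg : μ[A.indicator σ₂|ℱ n] =ᵐ[μ] A.indicator s₂ := condExp_indicator hσ₂I hAm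
    have hlhs2 : ∫ x in A, |(μ[A.indicator σ₁|ℱ n]) x * (μ[A.indicator σ₂|ℱ n]) x| ^ p
          * v x ∂μ
        = ∫ x in A, s₁ x ^ p * s₂ x ^ p * v x ∂μ := by
      apply setIntegral_congr_ae hAm0
      filter_upwards [hEf, hEg, hs₁pos, hs₂pos] with x h1 h2 h3 h4 hxA
      rw [h1, h2, indicator_of_mem hxA, indicator_of_mem hxA,
        abs_of_pos (mul_pos h3 h4), Real.mul_rpow h3.le h4.le]
    rw [hlhs2] at hH hX0
    set X : ℝ := ∫ x in A, s₁ x ^ p * s₂ x ^ p * v x ∂μ with hXdef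
    set R₁ : ℝ := ∫ x in A, σ₁ x ∂μ with hR₁def
    set R₂ : ℝ := ∫ x in A, σ₂ x ∂μ with hR₂def
    have hR₁0 : 0 ≤ R₁ := setIntegral_nonneg hAm0 fun x _ => (hσ₁pos x).le
    have hR₂0 : 0 ≤ R₂ := setIntegral_nonneg hAm0 fun x _ => (hσ₂pos x).le
    have step2 : X ≤ C ^ p * (R₁ ^ (p / p₁) * R₂ ^ (p / p₂)) := by
      have h1 : X = (X ^ (1 / p)) ^ p := by
        rw [← Real.rpow_mul hX0, one_div_mul_cancel hp0.ne', Real.rpow_one]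
      rw [h1]
      calc (X ^ (1 / p)) ^ p ≤ (C * R₁ ^ (1 / p₁) * R₂ ^ (1 / p₂)) ^ p :=
            Real.rpow_le_rpow (Real.rpow_nonneg hX0 _) hH hp0.le
        _ = C ^ p * (R₁ ^ (p / p₁) * R₂ ^ (p / p₂)) := by
            rw [Real.mul_rpow (mul_nonneg hC.le (Real.rpow_nonneg hR₁0 _))
                (Real.rpow_nonneg hR₂0 _),
              Real.mul_rpow hC.le (Real.rpow_nonneg hR₁0 _),
              ← Real.rpow_mul hR₁0, ← Real.rpow_mul hR₂0,
              show 1 / p₁ * p = p / p₁ from by ring,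
              show 1 / p₂ * p = p / p₂ from by ring]
            ring
    have step3 : R₁ ^ (p / p₁) * R₂ ^ (p / p₂)
        ≤ C * ∫ x in A, σ₁ x ^ (p / p₁) * σ₂ x ^ (p / p₂) ∂μ := by
      have h := hRH τ hτ
      rw [hτset] at h
      exact h
    -- Young / pull-out step
    have hyoung : ∀ x ∈ A, σ₁ x ^ (p / p₁) * σ₂ x ^ (p / p₂)
        ≤ p / p₁ * (A.indicator (fun y => s₁ y ^ (p / p₁ - 1) * s₂ y ^ (p / p₂)) x * σ₁ x)
          + p / p₂ * (A.indicator (fun y => s₁ y ^ (p / p₁) * s₂ y ^ (-(p / p₁))) x * σ₂ x) := by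
      intro x hx
      obtain ⟨-, h2, -, h4, -, -, -⟩ := hmem x hx
      have hs₁x : 0 < s₁ x := lt_of_lt_of_le (by positivity) h2
      have hs₂x : 0 < s₂ x := lt_of_lt_of_le (by positivity) h4
      have hy := aux_young (hσ₁pos x).le (hσ₂pos x).le hs₁x hs₂x hθ₁ hθlt
      rw [show (1:ℝ) - p / p₁ = p / p₂ from by linarith] at hy
      rw [indicator_of_mem hx, indicator_of_mem hx]
      calc σ₁ x ^ (p / p₁) * σ₂ x ^ (p / p₂) ≤ _ := hy
        _ = p / p₁ * (s₁ x ^ (p / p₁ - 1) * s₂ x ^ (p / p₂) * σ₁ x)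
            + p / p₂ * (s₁ x ^ (p / p₁) * s₂ x ^ (-(p / p₁)) * σ₂ x) := by ring
    have hφ₁m : StronglyMeasurable[ℱ n]
        (A.indicator (fun y => s₁ y ^ (p / p₁ - 1) * s₂ y ^ (p / p₂))) :=
      (((hs₁m.pow measurable_const).mul (hs₂m.pow measurable_const)).indicator
        hAm).stronglyMeasurable
    have hφ₂m : StronglyMeasurable[ℱ n]
        (A.indicator (fun y => s₁ y ^ (p / p₁) * s₂ y ^ (-(p / p₁)))) :=
      (((hs₁m.pow measurable_const).mul (hs₂m.pow measurable_const)).indicator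
        hAm).stronglyMeasurable
    have hφ₁B : ∀ x, |A.indicator (fun y => s₁ y ^ (p / p₁ - 1) * s₂ y ^ (p / p₂)) x|
        ≤ (1 / ((m:ℝ)+1)) ^ (p / p₁ - 1) * ((m:ℝ)+1) ^ (p / p₂) := by
      intro x
      by_cases hx : x ∈ A
      · rw [indicator_of_mem hx]
        obtain ⟨-, h2, h3, h4, h5, -, -⟩ := hmem x hx
        have hs₁x : 0 < s₁ x := lt_of_lt_of_le (by positivity) h2
        have hs₂x : 0 < s₂ x := lt_of_lt_of_le (by positivity) h4
        rw [abs_of_nonneg (by positivity)]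
        exact mul_le_mul (Real.rpow_le_rpow_of_nonpos (by positivity) h2 (by linarith))
          (Real.rpow_le_rpow hs₂x.le h5 hθ₂.le) (by positivity) (by positivity)
      · rw [indicator_of_notMem hx, abs_zero]; positivity
    have hφ₂B : ∀ x, |A.indicator (fun y => s₁ y ^ (p / p₁) * s₂ y ^ (-(p / p₁))) x|
        ≤ ((m:ℝ)+1) ^ (p / p₁) * (1 / ((m:ℝ)+1)) ^ (-(p / p₁)) := by
      intro x
      by_cases hx : x ∈ A
      · rw [indicator_of_mem hx]
        obtain ⟨-, h2, h3, h4, h5, -, -⟩ := hmem x hx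
        have hs₁x : 0 < s₁ x := lt_of_lt_of_le (by positivity) h2
        have hs₂x : 0 < s₂ x := lt_of_lt_of_le (by positivity) h4
        rw [abs_of_nonneg (by positivity)]
        exact mul_le_mul (Real.rpow_le_rpow hs₁x.le h3 hθ₁.le)
          (Real.rpow_le_rpow_of_nonpos (by positivity) h4 (by linarith))
          (by positivity) (by positivity)
      · rw [indicator_of_notMem hx, abs_zero]; positivity
    have hP₁ : Integrable
        (fun x => A.indicator (fun y => s₁ y ^ (p / p₁ - 1) * s₂ y ^ (p / p₂)) x * σ₁ x) μ :=
      hσ₁I.bdd_mul ((hφ₁m.mono hle).aestronglyMeasurable)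
        (ae_of_all _ fun x => by rw [Real.norm_eq_abs]; exact hφ₁B x)
    have hP₂ : Integrable
        (fun x => A.indicator (fun y => s₁ y ^ (p / p₁) * s₂ y ^ (-(p / p₁))) x * σ₂ x) μ :=
      hσ₂I.bdd_mul ((hφ₂m.mono hle).aestronglyMeasurable)
        (ae_of_all _ fun x => by rw [Real.norm_eq_abs]; exact hφ₂B x)
    have hQ₁ := aux_pullout hle hφ₁m _ hφ₁B hσ₁I
    have hQ₂ := aux_pullout hle hφ₂m _ hφ₂B hσ₂I
    have step4 : ∫ x in A, σ₁ x ^ (p / p₁) * σ₂ x ^ (p / p₂) ∂μ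
        ≤ ∫ x in A, s₁ x ^ (p / p₁) * s₂ x ^ (p / p₂) ∂μ := by
      have hintR : Integrable (fun x =>
          p / p₁ * (A.indicator (fun y => s₁ y ^ (p / p₁ - 1) * s₂ y ^ (p / p₂)) x * σ₁ x)
          + p / p₂ * (A.indicator (fun y => s₁ y ^ (p / p₁) * s₂ y ^ (-(p / p₁))) x * σ₂ x)) μ :=
        (hP₁.const_mul _).add (hP₂.const_mul _)
      have ha : ∫ x in A, σ₁ x ^ (p / p₁) * σ₂ x ^ (p / p₂) ∂μ
          ≤ ∫ x in A,
            (p / p₁ * (A.indicator (fun y => s₁ y ^ (p / p₁ - 1) * s₂ y ^ (p / p₂)) x * σ₁ x)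
            + p / p₂ * (A.indicator (fun y => s₁ y ^ (p / p₁) * s₂ y ^ (-(p / p₁))) x * σ₂ x)) ∂μ := by
        refine setIntegral_mono_on ?_ hintR.integrableOn hAm0 hyoung
        refine Integrable.mono' hintR.integrableOn ?_ ?_
        · exact (((hσ₁I.aestronglyMeasurable.aemeasurable.pow aemeasurable_const).mul
            (hσ₂I.aestronglyMeasurable.aemeasurable.pow
              aemeasurable_const)).aestronglyMeasurable).restrict
        · filter_upwards [ae_restrict_mem hAm0] with x hx
          rw [Real.norm_eq_abs, abs_of_nonneg (mul_nonneg (Real.rpow_nonneg (hσ₁pos x).le _)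
            (Real.rpow_nonneg (hσ₂pos x).le _))]
          exact hyoung x hx
      have hb : ∫ x in A,
            (p / p₁ * (A.indicator (fun y => s₁ y ^ (p / p₁ - 1) * s₂ y ^ (p / p₂)) x * σ₁ x)
            + p / p₂ * (A.indicator (fun y => s₁ y ^ (p / p₁) * s₂ y ^ (-(p / p₁))) x * σ₂ x)) ∂μ
          = p / p₁ * ∫ x, A.indicator (fun y => s₁ y ^ (p / p₁ - 1) * s₂ y ^ (p / p₂)) x * σ₁ x ∂μ
            + p / p₂ * ∫ x, A.indicator (fun y => s₁ y ^ (p / p₁) * s₂ y ^ (-(p / p₁))) x * σ₂ x ∂μ := by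
        have hid : (fun x =>
            p / p₁ * (A.indicator (fun y => s₁ y ^ (p / p₁ - 1) * s₂ y ^ (p / p₂)) x * σ₁ x)
            + p / p₂ * (A.indicator (fun y => s₁ y ^ (p / p₁) * s₂ y ^ (-(p / p₁))) x * σ₂ x))
            = A.indicator (fun x =>
            p / p₁ * (A.indicator (fun y => s₁ y ^ (p / p₁ - 1) * s₂ y ^ (p / p₂)) x * σ₁ x)
            + p / p₂ * (A.indicator (fun y => s₁ y ^ (p / p₁) * s₂ y ^ (-(p / p₁))) x * σ₂ x)) := by
          funext x
          by_cases hx : x ∈ A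
          · simp [indicator_of_mem hx]
          · simp [indicator_of_notMem hx]
        rw [← integral_indicator hAm0, ← hid, integral_add (hP₁.const_mul _) (hP₂.const_mul _),
          integral_const_mul, integral_const_mul]
      have e₁ : ∫ x, A.indicator (fun y => s₁ y ^ (p / p₁ - 1) * s₂ y ^ (p / p₂)) x * s₁ x ∂μ
          = ∫ x in A, s₁ x ^ (p / p₁) * s₂ x ^ (p / p₂) ∂μ := by
        rw [← integral_indicator hAm0]
        apply integral_congr_ae
        filter_upwards with x
        by_cases hx : x ∈ A
        · obtain ⟨-, h2, -, -, -, -, -⟩ := hmem x hx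
          have hs₁x : 0 < s₁ x := lt_of_lt_of_le (by positivity) h2
          rw [indicator_of_mem hx, indicator_of_mem hx]
          nth_rewrite 2 [← Real.rpow_one (s₁ x)]
          rw [show s₁ x ^ (p / p₁ - 1) * s₂ x ^ (p / p₂) * s₁ x ^ (1:ℝ)
              = s₁ x ^ (p / p₁ - 1) * s₁ x ^ (1:ℝ) * s₂ x ^ (p / p₂) from by ring,
            ← Real.rpow_add hs₁x, show p / p₁ - 1 + 1 = p / p₁ from by ring]
        · rw [indicator_of_notMem hx, indicator_of_notMem hx, zero_mul]
      have e₂ : ∫ x, A.indicator (fun y => s₁ y ^ (p / p₁) * s₂ y ^ (-(p / p₁))) x * s₂ x ∂μ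
          = ∫ x in A, s₁ x ^ (p / p₁) * s₂ x ^ (p / p₂) ∂μ := by
        rw [← integral_indicator hAm0]
        apply integral_congr_ae
        filter_upwards with x
        by_cases hx : x ∈ A
        · obtain ⟨-, -, -, h4, -, -, -⟩ := hmem x hx
          have hs₂x : 0 < s₂ x := lt_of_lt_of_le (by positivity) h4
          rw [indicator_of_mem hx, indicator_of_mem hx]
          nth_rewrite 2 [← Real.rpow_one (s₂ x)]
          rw [show s₁ x ^ (p / p₁) * s₂ x ^ (-(p / p₁)) * s₂ x ^ (1:ℝ)
              = s₁ x ^ (p / p₁) * (s₂ x ^ (-(p / p₁)) * s₂ x ^ (1:ℝ)) from by ring,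
            ← Real.rpow_add hs₂x, show -(p / p₁) + 1 = p / p₂ from by linarith]
        · rw [indicator_of_notMem hx, indicator_of_notMem hx, zero_mul]
      calc ∫ x in A, σ₁ x ^ (p / p₁) * σ₂ x ^ (p / p₂) ∂μ ≤ _ := ha
        _ = p / p₁ * ∫ x, A.indicator (fun y => s₁ y ^ (p / p₁ - 1) * s₂ y ^ (p / p₂)) x * σ₁ x ∂μ
            + p / p₂ * ∫ x, A.indicator (fun y => s₁ y ^ (p / p₁) * s₂ y ^ (-(p / p₁))) x * σ₂ x ∂μ := hb
        _ = p / p₁ * ∫ x, A.indicator (fun y => s₁ y ^ (p / p₁ - 1) * s₂ y ^ (p / p₂)) x * s₁ x ∂μ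
            + p / p₂ * ∫ x, A.indicator (fun y => s₁ y ^ (p / p₁) * s₂ y ^ (-(p / p₁))) x * s₂ x ∂μ := by
            rw [hQ₁, hQ₂]
        _ = (p / p₁) * ∫ x in A, s₁ x ^ (p / p₁) * s₂ x ^ (p / p₂) ∂μ
            + (p / p₂) * ∫ x in A, s₁ x ^ (p / p₁) * s₂ x ^ (p / p₂) ∂μ := by rw [e₁, e₂]
        _ = ∫ x in A, s₁ x ^ (p / p₁) * s₂ x ^ (p / p₂) ∂μ := by
            rw [← add_mul, hsum, one_mul]
    -- replace v by w
    have hφwB : ∀ x, |A.indicator (fun y => s₁ y ^ p * s₂ y ^ p) x|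
        ≤ ((m:ℝ)+1) ^ p * ((m:ℝ)+1) ^ p := by
      intro x
      by_cases hx : x ∈ A
      · rw [indicator_of_mem hx]
        obtain ⟨-, h2, h3, h4, h5, -, -⟩ := hmem x hx
        have hs₁x : 0 < s₁ x := lt_of_lt_of_le (by positivity) h2
        have hs₂x : 0 < s₂ x := lt_of_lt_of_le (by positivity) h4
        rw [abs_of_nonneg (by positivity)]
        exact mul_le_mul (Real.rpow_le_rpow hs₁x.le h3 hp0.le)
          (Real.rpow_le_rpow hs₂x.le h5 hp0.le) (by positivity) (by positivity)
      · rw [indicator_of_notMem hx, abs_zero]; positivity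
    have hφwm : StronglyMeasurable[ℱ n] (A.indicator (fun y => s₁ y ^ p * s₂ y ^ p)) :=
      (((hs₁m.pow measurable_const).mul (hs₂m.pow measurable_const)).indicator
        hAm).stronglyMeasurable
    have step5 : X = ∫ x in A, s₁ x ^ p * s₂ x ^ p * w x ∂μ := by
      have h := aux_pullout hle hφwm _ hφwB hvI
      have l1 : (fun x => A.indicator (fun y => s₁ y ^ p * s₂ y ^ p) x * v x)
          = A.indicator (fun x => s₁ x ^ p * s₂ x ^ p * v x) := by
        funext x
        by_cases hx : x ∈ A
        · rw [indicator_of_mem hx, indicator_of_mem hx]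
        · rw [indicator_of_notMem hx, indicator_of_notMem hx, zero_mul]
      have l2 : (fun x => A.indicator (fun y => s₁ y ^ p * s₂ y ^ p) x * w x)
          = A.indicator (fun x => s₁ x ^ p * s₂ x ^ p * w x) := by
        funext x
        by_cases hx : x ∈ A
        · rw [indicator_of_mem hx, indicator_of_mem hx]
        · rw [indicator_of_notMem hx, indicator_of_notMem hx, zero_mul]
      rw [l1, l2, integral_indicator hAm0, integral_indicator hAm0] at h
      exact h
    have step6 : (C ^ p * C + 1) * (∫ x in A, s₁ x ^ (p / p₁) * s₂ x ^ (p / p₂) ∂μ)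
        ≤ ∫ x in A, s₁ x ^ p * s₂ x ^ p * w x ∂μ := by
      rw [← integral_const_mul]
      refine setIntegral_mono_on ?_ ?_ hAm0 ?_
      · refine bnd _ (((hs₁m.pow measurable_const).mul (hs₂m.pow measurable_const)).const_mul
          (C ^ p * C + 1))
          (|C ^ p * C + 1| * (((m:ℝ)+1) ^ (p / p₁) * ((m:ℝ)+1) ^ (p / p₂))) ?_
        intro x hx
        obtain ⟨-, h2, h3, h4, h5, -, -⟩ := hmem x hx
        have hs₁x : 0 < s₁ x := lt_of_lt_of_le (by positivity) h2
        have hs₂x : 0 < s₂ x := lt_of_lt_of_le (by positivity) h4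
        rw [abs_mul, abs_of_nonneg (by positivity : (0:ℝ) ≤ s₁ x ^ (p / p₁) * s₂ x ^ (p / p₂))]
        refine mul_le_mul_of_nonneg_left ?_ (abs_nonneg _)
        exact mul_le_mul (Real.rpow_le_rpow hs₁x.le h3 hθ₁.le)
          (Real.rpow_le_rpow hs₂x.le h5 hθ₂.le) (by positivity) (by positivity)
      · refine bnd _ (((hs₁m.pow measurable_const).mul (hs₂m.pow measurable_const)).mul hwm)
          ((((m:ℝ)+1) ^ p * ((m:ℝ)+1) ^ p) * ((m:ℝ)+1)) ?_
        intro x hx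
        obtain ⟨-, h2, h3, h4, h5, h6, h7⟩ := hmem x hx
        have hs₁x : 0 < s₁ x := lt_of_lt_of_le (by positivity) h2
        have hs₂x : 0 < s₂ x := lt_of_lt_of_le (by positivity) h4
        rw [abs_of_nonneg (by positivity)]
        refine mul_le_mul (mul_le_mul (Real.rpow_le_rpow hs₁x.le h3 hp0.le)
          (Real.rpow_le_rpow hs₂x.le h5 hp0.le) (by positivity) (by positivity)) h7 h6
          (by positivity)
      · intro x hx
        obtain ⟨h1, h2, h3, h4, h5, h6, h7⟩ := hmem x hx
        have hs₁x : 0 < s₁ x := lt_of_lt_of_le (by positivity) h2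
        have hs₂x : 0 < s₂ x := lt_of_lt_of_le (by positivity) h4
        have hG : G x * (s₁ x ^ (p / p₁) * s₂ x ^ (p / p₂)) = s₁ x ^ p * s₂ x ^ p * w x := by
          simp only [hGdef]
          rw [show w x * s₁ x ^ (p * ((p₁ - 1) / p₁)) * s₂ x ^ (p * ((p₂ - 1) / p₂))
              * (s₁ x ^ (p / p₁) * s₂ x ^ (p / p₂))
              = w x * (s₁ x ^ (p * ((p₁ - 1) / p₁)) * s₁ x ^ (p / p₁))
                * (s₂ x ^ (p * ((p₂ - 1) / p₂)) * s₂ x ^ (p / p₂)) from by ring,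
            ← Real.rpow_add hs₁x, ← Real.rpow_add hs₂x,
            show p * ((p₁ - 1) / p₁) + p / p₁ = p from by field_simp; ring,
            show p * ((p₂ - 1) / p₂) + p / p₂ = p from by field_simp; ring]
          ring
        calc (C ^ p * C + 1) * (s₁ x ^ (p / p₁) * s₂ x ^ (p / p₂))
            ≤ G x * (s₁ x ^ (p / p₁) * s₂ x ^ (p / p₂)) :=
              mul_le_mul_of_nonneg_right h1.le (by positivity)
          _ = s₁ x ^ p * s₂ x ^ p * w x := hG
    -- combine
    have hIle : (C ^ p * C + 1) * (∫ x in A, s₁ x ^ (p / p₁) * s₂ x ^ (p / p₂) ∂μ)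
        ≤ (C ^ p * C) * (∫ x in A, s₁ x ^ (p / p₁) * s₂ x ^ (p / p₂) ∂μ) := by
      calc (C ^ p * C + 1) * (∫ x in A, s₁ x ^ (p / p₁) * s₂ x ^ (p / p₂) ∂μ)
          ≤ ∫ x in A, s₁ x ^ p * s₂ x ^ p * w x ∂μ := step6
        _ = X := step5.symm
        _ ≤ C ^ p * (R₁ ^ (p / p₁) * R₂ ^ (p / p₂)) := step2
        _ ≤ C ^ p * (C * ∫ x in A, σ₁ x ^ (p / p₁) * σ₂ x ^ (p / p₂) ∂μ) :=
            mul_le_mul_of_nonneg_left step3 (by positivity)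
        _ ≤ C ^ p * (C * ∫ x in A, s₁ x ^ (p / p₁) * s₂ x ^ (p / p₂) ∂μ) :=
            mul_le_mul_of_nonneg_left
              (mul_le_mul_of_nonneg_left step4 hC.le) (by positivity)
        _ = (C ^ p * C) * (∫ x in A, s₁ x ^ (p / p₁) * s₂ x ^ (p / p₂) ∂μ) := by ring
    have hI0 : (∫ x in A, s₁ x ^ (p / p₁) * s₂ x ^ (p / p₂) ∂μ) ≤ 0 := by linarith
    have hIlb : (1 / ((m:ℝ)+1)) * (μ A).toReal
        ≤ ∫ x in A, s₁ x ^ (p / p₁) * s₂ x ^ (p / p₂) ∂μ := by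
      refine setIntegral_ge_of_const_le_real hAm0 (measure_ne_top μ A) ?_ ?_
      · intro x hx
        obtain ⟨-, h2, -, h4, -, -, -⟩ := hmem x hx
        calc (1:ℝ) / ((m:ℝ)+1)
            = (1 / ((m:ℝ)+1)) ^ (p / p₁) * (1 / ((m:ℝ)+1)) ^ (p / p₂) := by
              rw [← Real.rpow_add (by positivity), hsum, Real.rpow_one]
          _ ≤ s₁ x ^ (p / p₁) * s₂ x ^ (p / p₂) :=
              mul_le_mul (Real.rpow_le_rpow (by positivity) h2 hθ₁.le)
                (Real.rpow_le_rpow (by positivity) h4 hθ₂.le) (by positivity)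
                (Real.rpow_nonneg (le_trans (by positivity) h2) _)
      · refine bnd _ ((hs₁m.pow measurable_const).mul (hs₂m.pow measurable_const))
          (((m:ℝ)+1) ^ (p / p₁) * ((m:ℝ)+1) ^ (p / p₂)) ?_
        intro x hx
        obtain ⟨-, h2, h3, h4, h5, -, -⟩ := hmem x hx
        have hs₁x : 0 < s₁ x := lt_of_lt_of_le (by positivity) h2
        have hs₂x : 0 < s₂ x := lt_of_lt_of_le (by positivity) h4
        rw [abs_of_nonneg (by positivity)]
        exact mul_le_mul (Real.rpow_le_rpow hs₁x.le h3 hθ₁.le)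
          (Real.rpow_le_rpow hs₂x.le h5 hθ₂.le) (by positivity) (by positivity)
    have htr : (μ A).toReal = 0 := by
      have h0 : 0 ≤ (μ A).toReal := ENNReal.toReal_nonneg
      have hMpos : (0:ℝ) < 1 / ((m:ℝ)+1) := by positivity
      nlinarith
    exact ((ENNReal.toReal_eq_zero_iff _).mp htr).resolve_right (measure_ne_top μ A)
  -- conclude
  have hcover : ∀ᵐ x ∂μ, G x ≤ C ^ p * C + 1 := by
    have hnull : ∀ m : ℕ, ∀ᵐ x ∂μ, x ∉ Aset m := fun m =>
      measure_eq_zero_iff_ae_notMem.mp (key0 m)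
    filter_upwards [hs₁pos, hs₂pos, hwpos, ae_all_iff.mpr hnull] with x h1 h2 h3 h4
    by_contra hlt
    push_neg at hlt
    obtain ⟨m, hm⟩ := exists_nat_ge
      (max (max (s₁ x) (s₂ x)) (max (w x) (max (1 / s₁ x) (1 / s₂ x))))
    have hb₁ : s₁ x ≤ (m:ℝ)+1 := by
      have := (le_max_left (s₁ x) (s₂ x)).trans ((le_max_left _ _).trans hm); linarith
    have hb₂ : s₂ x ≤ (m:ℝ)+1 := by
      have := (le_max_right (s₁ x) (s₂ x)).trans ((le_max_left _ _).trans hm); linarith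
    have hb₃ : w x ≤ (m:ℝ)+1 := by
      have := (le_max_left (w x) _).trans ((le_max_right _ _).trans hm); linarith
    have hb₄ : 1 / s₁ x ≤ (m:ℝ)+1 := by
      have := ((le_max_left (1 / s₁ x) (1 / s₂ x)).trans (le_max_right (w x) _)).trans
        ((le_max_right _ _).trans hm); linarith
    have hb₅ : 1 / s₂ x ≤ (m:ℝ)+1 := by
      have := ((le_max_right (1 / s₁ x) (1 / s₂ x)).trans (le_max_right (w x) _)).trans
        ((le_max_right _ _).trans hm); linarith
    have hlo₁ : 1 / ((m:ℝ)+1) ≤ s₁ x := (one_div_le h1 (by positivity)).mp hb₄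
    have hlo₂ : 1 / ((m:ℝ)+1) ≤ s₂ x := (one_div_le h2 (by positivity)).mp hb₅
    exact h4 m ⟨⟨⟨⟨⟨⟨hlt, hlo₁⟩, hb₁⟩, hlo₂⟩, hb₂⟩, h3.le⟩, hb₃⟩
  filter_upwards [hcover, hs₁pos, hs₂pos, hwpos] with x hGx h1 h2 h3
  have hfin : w x ^ (1 / p) * s₁ x ^ ((p₁ - 1) / p₁) * s₂ x ^ ((p₂ - 1) / p₂)
      = G x ^ (1 / p) := by
    simp only [hGdef]
    rw [Real.mul_rpow (mul_nonneg h3.le (Real.rpow_nonneg h1.le _)) (Real.rpow_nonneg h2.le _),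
      Real.mul_rpow h3.le (Real.rpow_nonneg h1.le _),
      ← Real.rpow_mul h1.le, ← Real.rpow_mul h2.le,
      show p * ((p₁ - 1) / p₁) * (1 / p) = (p₁ - 1) / p₁ from by
        rw [mul_comm p, mul_assoc, mul_one_div, div_self hp0.ne', mul_one],
      show p * ((p₂ - 1) / p₂) * (1 / p) = (p₂ - 1) / p₂ from by
        rw [mul_comm p, mul_assoc, mul_one_div, div_self hp0.ne', mul_one]]
  rw [hfin]
  exact Real.rpow_le_rpow (by positivity) hGx hpinv.le

end
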